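/- arXiv:1203.4623 — 3 statements merged into one kernel-verified Lean document; each statement's English description precedes it below -/
import Mathlib

section
/- Let f be C¹ on [0,∞) with f(0) = 0, f'(0) = 0, and lim_{u→0} f(u)/u^p = −k for some p > 1 and k > 0. Let V(u) = −∫₀ᵘ f(s) ds, and let v be a positive symmetric decreasing solution of v'' + f(v) = 0 with v(±∞) = 0, determined implicitly by |x| = ∫_{v(x)}^{θ*} du/√(2V(u)). Then there exist constants C₁, C₂ > 0 such that C₁ |x|^{−2/(p−1)} ≤ v(x) ≤ C₂ |x|^{−2/(p−1)} for all sufficiently large |x|. -/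
open Set Filter

/-- Algebraic decay of the bump solution in the degenerate case `f'(0) = 0`,
`f(u) ~ -k u^p` as `u → 0⁺`: the bump `v`, given implicitly by
`|x| = ∫_{v(x)}^{θ*} du/√(2V(u))`, satisfies `v(x) ≍ |x|^{-2/(p-1)}` as `|x| → ∞`. -/
theorem stmt_4 (f v : ℝ → ℝ) (p k θs : ℝ) (hp : 1 < p) (hk : 0 < k) (hθs : 0 < θs)
    (hf : ContDiff ℝ 1 f) (hf0 : f 0 = 0) (hf'0 : deriv f 0 = 0)
    (hfas : Tendsto (fun u => f u / u ^ p) (nhdsWithin 0 (Ioi 0)) (nhds (-k)))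
    (V : ℝ → ℝ) (hV : ∀ u, V u = -∫ s in (0 : ℝ)..u, f s)
    (hv : ContDiff ℝ 2 v)
    (hpos : ∀ x, 0 < v x)
    (heven : ∀ x, v (-x) = v x)
    (hdec : AntitoneOn v (Ici 0))
    (hode : ∀ x, deriv (deriv v) x + f (v x) = 0)
    (htop : Tendsto v atTop (nhds 0))
    (hbot : Tendsto v atBot (nhds 0))
    (himp : ∀ x : ℝ, |x| = ∫ u in (v x)..θs, 1 / Real.sqrt (2 * V u)) :
    ∃ C₁ C₂ R : ℝ, 0 < C₁ ∧ 0 < C₂ ∧ 0 < R ∧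
      ∀ x : ℝ, R ≤ |x| →
        C₁ * |x| ^ (-(2 / (p - 1))) ≤ v x ∧ v x ≤ C₂ * |x| ^ (-(2 / (p - 1))) := by
  have hfc : Continuous f := hf.continuous
  set h : ℝ → ℝ := fun u => 1 / Real.sqrt (2 * V u) with hh
  -- Step 1: pointwise bounds on -f near 0
  obtain ⟨δ, hδ0, hδ⟩ : ∃ δ > 0, ∀ u : ℝ, 0 < u → u ≤ δ →
      (k / 2) * u ^ p ≤ -f u ∧ -f u ≤ (3 * k / 2) * u ^ p := by
    have hmem : Ioo (-(3 * k / 2)) (-(k / 2)) ∈ nhds (-k) := by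
      apply Ioo_mem_nhds <;> linarith
    have h1 : ∀ᶠ u in nhdsWithin 0 (Ioi 0),
        f u / u ^ p ∈ Ioo (-(3 * k / 2)) (-(k / 2)) := hfas hmem
    rw [eventually_nhdsWithin_iff, Metric.eventually_nhds_iff] at h1
    obtain ⟨ε, hε, hball⟩ := h1
    refine ⟨ε / 2, by linarith, fun u hu hu' => ?_⟩
    have hd : dist u 0 < ε := by
      rw [Real.dist_eq, sub_zero, abs_of_pos hu]; linarith
    have := hball hd hu
    obtain ⟨hlo, hhi⟩ := this
    have hup : (0 : ℝ) < u ^ p := Real.rpow_pos_of_pos hu p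
    have h2 := (div_lt_iff₀ hup).mp hhi
    have h3 := (lt_div_iff₀ hup).mp hlo
    constructor <;> nlinarith
  -- basic constants
  have hp1 : (0:ℝ) < p + 1 := by linarith
  have hq0 : (0:ℝ) < (p - 1) / 2 := by linarith
  set q : ℝ := (p - 1) / 2 with hq
  clear_value q
  -- V as a primitive of -f
  have hfint : ∀ a b : ℝ, IntervalIntegrable (fun s => -f s) MeasureTheory.volume a b :=
    fun a b => (hfc.neg).intervalIntegrable a b
  have hVint : ∀ u : ℝ, V u = ∫ s in (0:ℝ)..u, (-f s) := by
    intro u; rw [hV, intervalIntegral.integral_neg]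
  have hrp : Continuous fun s : ℝ => s ^ p := Real.continuous_rpow_const (by linarith)
  -- Step 2: bounds on V on (0, δ]
  have hVlb : ∀ u : ℝ, 0 < u → u ≤ δ → k / (2 * (p + 1)) * u ^ (p + 1) ≤ V u := by
    intro u hu hud
    rw [hVint]
    have hint1 : IntervalIntegrable (fun s => (k / 2) * s ^ p) MeasureTheory.volume 0 u :=
      (continuous_const.mul hrp).intervalIntegrable 0 u
    have hmono := intervalIntegral.integral_mono_on hu.le hint1 (hfint 0 u) ?_
    · rw [intervalIntegral.integral_const_mul,
        integral_rpow (Or.inl (by linarith : (-1:ℝ) < p))] at hmono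
      have h0 : (0:ℝ) ^ (p + 1) = 0 := Real.zero_rpow (by linarith)
      rw [h0] at hmono
      have heq : k / (2 * (p + 1)) * u ^ (p + 1) = k / 2 * ((u ^ (p + 1) - 0) / (p + 1)) := by
        rw [sub_zero]; field_simp
      linarith [hmono]
    · intro s hs
      rcases eq_or_lt_of_le hs.1 with rfl | hs0
      · simp [Real.zero_rpow (by linarith : p ≠ 0), hf0]
      · exact (hδ s hs0 (le_trans hs.2 hud)).1
  have hVub : ∀ u : ℝ, 0 < u → u ≤ δ → V u ≤ 3 * k / (2 * (p + 1)) * u ^ (p + 1) := by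
    intro u hu hud
    rw [hVint]
    have hint1 : IntervalIntegrable (fun s => (3 * k / 2) * s ^ p) MeasureTheory.volume 0 u :=
      (continuous_const.mul hrp).intervalIntegrable 0 u
    have hmono := intervalIntegral.integral_mono_on hu.le (hfint 0 u) hint1 ?_
    · rw [intervalIntegral.integral_const_mul,
        integral_rpow (Or.inl (by linarith : (-1:ℝ) < p))] at hmono
      have h0 : (0:ℝ) ^ (p + 1) = 0 := Real.zero_rpow (by linarith)
      rw [h0] at hmono
      have heq : 3 * k / (2 * (p + 1)) * u ^ (p + 1) = 3 * k / 2 * ((u ^ (p + 1) - 0) / (p + 1)) := by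
        rw [sub_zero]; field_simp
      linarith [hmono]
    · intro s hs
      rcases eq_or_lt_of_le hs.1 with rfl | hs0
      · simp [Real.zero_rpow (by linarith : p ≠ 0), hf0]
      · exact (hδ s hs0 (le_trans hs.2 hud)).2
  -- continuity of V
  have hVcont : Continuous V := by
    have hVe : V = fun u => ∫ s in (0:ℝ)..u, (-f s) := funext hVint
    rw [hVe]
    exact intervalIntegral.continuous_primitive hfint 0
  set c₁ : ℝ := 1 / Real.sqrt (3 * k / (p + 1)) with hc₁def
  set c₂ : ℝ := 1 / Real.sqrt (k / (p + 1)) with hc₂def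
  have hsqb : (0:ℝ) < Real.sqrt (3 * k / (p + 1)) := Real.sqrt_pos.mpr (by positivity)
  have hsqa : (0:ℝ) < Real.sqrt (k / (p + 1)) := Real.sqrt_pos.mpr (by positivity)
  have hc₁ : 0 < c₁ := by rw [hc₁def]; positivity
  have hc₂ : 0 < c₂ := by rw [hc₂def]; positivity
  have hVpos : ∀ u : ℝ, 0 < u → u ≤ δ → 0 < V u := by
    intro u hu hud
    have := hVlb u hu hud
    have h1 : (0:ℝ) < k / (2 * (p + 1)) * u ^ (p + 1) := by
      have := Real.rpow_pos_of_pos hu (p + 1)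
      positivity
    linarith
  -- the square-root expression bounds
  have hsqrtpow : ∀ u : ℝ, 0 < u → ∀ c : ℝ, 0 ≤ c →
      Real.sqrt (c * u ^ (p + 1)) = Real.sqrt c * u ^ ((p + 1) / 2) := by
    intro u hu c hc
    rw [Real.sqrt_mul hc, Real.sqrt_eq_rpow (u ^ (p + 1)), ← Real.rpow_mul hu.le]
    have : (p + 1) * (1 / 2 : ℝ) = (p + 1) / 2 := by ring
    rw [this]
  have hhub : ∀ u : ℝ, 0 < u → u ≤ δ → h u ≤ c₂ * u ^ (-((p + 1) / 2)) := by
    intro u hu hud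
    have hVl := hVlb u hu hud
    have heq2 : k / (p + 1) * u ^ (p + 1) = 2 * (k / (2 * (p + 1)) * u ^ (p + 1)) := by
      field_simp
    have hsq : Real.sqrt (k / (p + 1)) * u ^ ((p + 1) / 2) ≤ Real.sqrt (2 * V u) := by
      rw [← hsqrtpow u hu _ (by positivity)]
      exact Real.sqrt_le_sqrt (by linarith)
    have hpos2 : 0 < Real.sqrt (k / (p + 1)) * u ^ ((p + 1) / 2) := by
      have := Real.rpow_pos_of_pos hu ((p + 1) / 2)
      positivity
    have h1 : h u ≤ 1 / (Real.sqrt (k / (p + 1)) * u ^ ((p + 1) / 2)) :=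
      one_div_le_one_div_of_le hpos2 hsq
    have h2 : 1 / (Real.sqrt (k / (p + 1)) * u ^ ((p + 1) / 2)) = c₂ * u ^ (-((p + 1) / 2)) := by
      rw [Real.rpow_neg hu.le, hc₂def]; ring
    rw [← h2]; exact h1
  have hhlb : ∀ u : ℝ, 0 < u → u ≤ δ → c₁ * u ^ (-((p + 1) / 2)) ≤ h u := by
    intro u hu hud
    have hVu := hVub u hu hud
    have hVp := hVpos u hu hud
    have heq2 : 3 * k / (p + 1) * u ^ (p + 1) = 2 * (3 * k / (2 * (p + 1)) * u ^ (p + 1)) := by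
      field_simp
    have hsq : Real.sqrt (2 * V u) ≤ Real.sqrt (3 * k / (p + 1)) * u ^ ((p + 1) / 2) := by
      rw [← hsqrtpow u hu _ (by positivity)]
      exact Real.sqrt_le_sqrt (by linarith)
    have hpos2 : 0 < Real.sqrt (2 * V u) := Real.sqrt_pos.mpr (by linarith)
    have h1 : 1 / (Real.sqrt (3 * k / (p + 1)) * u ^ ((p + 1) / 2)) ≤ h u :=
      one_div_le_one_div_of_le hpos2 hsq
    have h2 : 1 / (Real.sqrt (3 * k / (p + 1)) * u ^ ((p + 1) / 2)) = c₁ * u ^ (-((p + 1) / 2)) := by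
      rw [Real.rpow_neg hu.le, hc₁def]; ring
    rw [← h2]; exact h1
  -- the threshold level t and the point x₁ where v x₁ = t
  set t : ℝ := min δ (v 1) with htdef
  have ht0 : 0 < t := lt_min hδ0 (hpos 1)
  have htδ : t ≤ δ := min_le_left _ _
  obtain ⟨X, hX1, hXt⟩ : ∃ X : ℝ, 1 ≤ X ∧ v X ≤ t := by
    have hev := htop.eventually_lt_const ht0
    rw [eventually_atTop] at hev
    obtain ⟨M, hM⟩ := hev
    exact ⟨max M 1, le_max_right _ _, (hM _ (le_max_left _ _)).le⟩
  obtain ⟨x₁, hx₁mem, hx₁⟩ : ∃ x₁ ∈ Icc (1:ℝ) X, v x₁ = t := by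
    have hsub := intermediate_value_Icc' hX1 (hv.continuous.continuousOn (s := Icc 1 X))
    have hmem : t ∈ Icc (v X) (v 1) := ⟨hXt, min_le_right _ _⟩
    obtain ⟨x₁, hx₁, he⟩ := hsub hmem
    exact ⟨x₁, hx₁, he⟩
  have hx₁1 : (1:ℝ) ≤ x₁ := hx₁mem.1
  -- integrability of h on [t, θs] and value of that integral
  have hIt : IntervalIntegrable h MeasureTheory.volume t θs := by
    by_contra hni
    have h1 := himp x₁
    rw [hx₁, intervalIntegral.integral_undef hni] at h1
    rw [abs_of_nonneg (by linarith : (0:ℝ) ≤ x₁)] at h1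
    linarith
  have hx₁int : ∫ u in t..θs, h u = x₁ := by
    have h1 := himp x₁
    rw [hx₁] at h1
    rw [← h1, abs_of_nonneg (by linarith : (0:ℝ) ≤ x₁)]
  -- eventually v x ≤ t
  obtain ⟨R₀, hR₀⟩ : ∃ R₀ : ℝ, ∀ x ≥ R₀, v x ≤ t := by
    have hev := htop.eventually_lt_const ht0
    rw [eventually_atTop] at hev
    obtain ⟨M, hM⟩ := hev
    exact ⟨M, fun x hx => (hM x hx).le⟩
  -- final constants
  set e : ℝ := -(2 / (p - 1)) with hedef
  have he0 : e ≤ 0 := by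
    rw [hedef]
    have : (0:ℝ) ≤ 2 / (p - 1) := div_nonneg (by norm_num) (by linarith)
    linarith
  have hqe : -q * e = 1 := by
    have hne : p - 1 ≠ 0 := by intro H; rw [sub_eq_zero] at H; exact absurd H (by linarith)
    rw [hedef, hq]
    field_simp
  refine ⟨(2 * q / c₁) ^ e, (q / (2 * c₂)) ^ e,
    max (max (2 * x₁) ((c₁ / q) * t ^ (-q))) R₀,
    Real.rpow_pos_of_pos (by positivity) e, Real.rpow_pos_of_pos (by positivity) e, ?_, ?_⟩
  · calc (0:ℝ) < 2 * x₁ := by linarith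
      _ ≤ _ := le_trans (le_max_left _ _) (le_max_left _ _)
  intro x hx
  have hx2x₁ : 2 * x₁ ≤ |x| := le_trans (le_trans (le_max_left _ _) (le_max_left _ _)) hx
  have hxB : (c₁ / q) * t ^ (-q) ≤ |x| :=
    le_trans (le_trans (le_max_right _ _) (le_max_left _ _)) hx
  have hxR₀ : R₀ ≤ |x| := le_trans (le_max_right _ _) hx
  have hx0 : 0 < |x| := by linarith
  have hvt : v x ≤ t := by
    rcases le_or_gt 0 x with hx' | hx'
    · exact hR₀ x (by rwa [abs_of_nonneg hx'] at hxR₀)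
    · have hevx : v x = v (-x) := by rw [heven x]
      rw [hevx]
      exact hR₀ (-x) (by rwa [abs_of_neg hx'] at hxR₀)
  have hw0 : 0 < v x := hpos x
  have hwδ : v x ≤ δ := le_trans hvt htδ
  -- integrability of h on [v x, t]
  have hcont : ContinuousOn h (Set.uIcc (v x) t) := by
    rw [Set.uIcc_of_le hvt]
    have hs : ContinuousOn (fun u => Real.sqrt (2 * V u)) (Icc (v x) t) :=
      (Real.continuous_sqrt.comp (continuous_const.mul hVcont)).continuousOn
    refine ContinuousOn.div continuousOn_const hs ?_
    intro u hu
    have hu0 : 0 < u := lt_of_lt_of_le hw0 hu.1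
    have hVp := hVpos u hu0 (le_trans hu.2 htδ)
    exact (Real.sqrt_pos.mpr (by linarith)).ne'
  have hIvt : IntervalIntegrable h MeasureTheory.volume (v x) t := hcont.intervalIntegrable
  have hsplit := intervalIntegral.integral_add_adjacent_intervals hIvt hIt
  have hJ : ∫ u in (v x)..t, h u = |x| - x₁ := by
    have h1 := himp x
    rw [← hsplit, hx₁int] at h1
    linarith
  have hcrp : ∀ c : ℝ, IntervalIntegrable (fun u => c * u ^ (-((p + 1) / 2)))
      MeasureTheory.volume (v x) t := by
    intro c
    apply ContinuousOn.intervalIntegrable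
    rw [Set.uIcc_of_le hvt]
    refine continuousOn_const.mul (fun u hu => ?_)
    exact (Real.continuousAt_rpow_const u _ (Or.inl (lt_of_lt_of_le hw0 hu.1).ne')).continuousWithinAt
  have hrint : ∀ c : ℝ, ∫ u in (v x)..t, c * u ^ (-((p + 1) / 2))
      = (c / q) * ((v x) ^ (-q) - t ^ (-q)) := by
    intro c
    have hne : -((p + 1) / 2) ≠ -1 := by
      intro H
      have hp1' : p = 1 := by linarith
      linarith
    have hnm : (0:ℝ) ∉ Set.uIcc (v x) t := by
      rw [Set.uIcc_of_le hvt]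
      intro H
      exact absurd H.1 (not_le.mpr hw0)
    rw [intervalIntegral.integral_const_mul, integral_rpow (Or.inr ⟨hne, hnm⟩)]
    have hex : -((p + 1) / 2) + 1 = -q := by rw [hq]; ring
    rw [hex]
    have hqne : q ≠ 0 := ne_of_gt hq0
    generalize t ^ (-q) = A
    generalize (v x) ^ (-q) = B
    rw [div_neg]
    ring
  have hbnd_lo := intervalIntegral.integral_mono_on hvt (hcrp c₁) hIvt
    (fun u hu => hhlb u (lt_of_lt_of_le hw0 hu.1) (le_trans hu.2 htδ))
  have hbnd_hi := intervalIntegral.integral_mono_on hvt hIvt (hcrp c₂)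
    (fun u hu => hhub u (lt_of_lt_of_le hw0 hu.1) (le_trans hu.2 htδ))
  rw [hrint c₁, hJ] at hbnd_lo
  rw [hJ, hrint c₂] at hbnd_hi
  set W : ℝ := (v x) ^ (-q) with hWdef
  have hW0 : 0 < W := Real.rpow_pos_of_pos hw0 _
  have htq0 : 0 < t ^ (-q) := Real.rpow_pos_of_pos ht0 _
  have hvW : v x = W ^ e := by
    rw [hWdef]
    calc v x = (v x) ^ ((-q) * e) := by rw [hqe, Real.rpow_one]
      _ = ((v x) ^ (-q)) ^ e := Real.rpow_mul hw0.le _ _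
  clear_value W t e c₁ c₂
  constructor
  · -- lower bound
    have h1 : (c₁ / q) * W ≤ 2 * |x| := by
      have hd : c₁ / q * (W - t ^ (-q)) = c₁ / q * W - c₁ / q * t ^ (-q) := by ring
      linarith [hbnd_lo, hxB, hx₁1]
    have h2 : W ≤ (2 * q / c₁) * |x| := by
      have h3 := mul_le_mul_of_nonneg_left h1 (le_of_lt (div_pos hq0 hc₁))
      have h4 : q / c₁ * ((c₁ / q) * W) = W := by field_simp
      rw [h4] at h3
      calc W ≤ q / c₁ * (2 * |x|) := h3
        _ = (2 * q / c₁) * |x| := by ring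
    have h5 : ((2 * q / c₁) * |x|) ^ e ≤ W ^ e :=
      Real.rpow_le_rpow_of_nonpos hW0 h2 he0
    rw [hvW]
    calc (2 * q / c₁) ^ e * |x| ^ e = ((2 * q / c₁) * |x|) ^ e :=
        (Real.mul_rpow (by positivity) hx0.le).symm
      _ ≤ W ^ e := h5
  · -- upper bound
    have h1 : |x| / 2 ≤ (c₂ / q) * W := by
      have hd : c₂ / q * (W - t ^ (-q)) = c₂ / q * W - c₂ / q * t ^ (-q) := by ring
      have hd2 : 0 < c₂ / q * t ^ (-q) := mul_pos (div_pos hc₂ hq0) htq0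
      linarith [hbnd_hi, hx2x₁, hx₁1]
    have h2 : (q / (2 * c₂)) * |x| ≤ W := by
      have h3 := mul_le_mul_of_nonneg_left h1 (le_of_lt (div_pos hq0 hc₂))
      have h4 : q / c₂ * ((c₂ / q) * W) = W := by field_simp
      rw [h4] at h3
      calc (q / (2 * c₂)) * |x| = q / c₂ * (|x| / 2) := by ring
        _ ≤ W := h3
    have h5 : W ^ e ≤ ((q / (2 * c₂)) * |x|) ^ e :=
      Real.rpow_le_rpow_of_nonpos (by positivity) h2 he0
    rw [hvW]
    calc W ^ e ≤ ((q / (2 * c₂)) * |x|) ^ e := h5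
      _ = (q / (2 * c₂)) ^ e * |x| ^ e := Real.mul_rpow (by positivity) hx0.le
end

section
/- Let g, K : [0,∞) → ℝ be continuous with ‖K‖_∞ ≤ 𝒦 and ∫₀^∞ g² dx ≤ G² < ∞. Let w ∈ C²([0,L]) solve w'' = g − K w with w'(0) = 0, w(0) = α. Then max_{0≤x≤L} |w(x)| ≤ 2^l |α| + (2^l − 1)·2δ√L·G, where l is any integer with δ := L/l satisfying 2 δ L 𝒦 ≤ 1. -/
open Set MeasureTheory

private lemma cs_aux (g : ℝ → ℝ) (G L y : ℝ) (hG : 0 ≤ G) (hgc : Continuous g)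
    (hg2 : ∫ x in Ioi (0 : ℝ), (g x) ^ 2 ≤ G ^ 2)
    (hg2i : IntegrableOn (fun x => (g x) ^ 2) (Ioi (0 : ℝ)))
    (hy : 0 ≤ y) (hyL : y ≤ L) :
    ∫ t in Ioc (0:ℝ) y, |g t| ≤ Real.sqrt L * G := by
  set μ := volume.restrict (Ioc (0:ℝ) y) with hμ
  haveI : IsFiniteMeasure μ := by
    constructor
    rw [hμ, Measure.restrict_apply_univ]
    exact (measure_Ioc_lt_top)
  obtain ⟨Mg, hMg⟩ := (isCompact_Icc (a := (0:ℝ)) (b := y)).exists_bound_of_continuousOn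
    hgc.continuousOn
  have hmem : MemLp g (ENNReal.ofReal 2) μ := by
    apply MemLp.of_bound hgc.aestronglyMeasurable Mg
    refine (ae_restrict_iff' measurableSet_Ioc).mpr (ae_of_all _ fun t ht => ?_)
    exact hMg t ⟨ht.1.le, ht.2⟩
  have hmem1 : MemLp (fun _ : ℝ => (1:ℝ)) (ENNReal.ofReal 2) μ := memLp_const 1
  have hpq : Real.HolderConjugate 2 2 := Real.HolderConjugate.two_two
  have hCS := integral_mul_norm_le_Lp_mul_Lq (μ := μ) hpq hmem hmem1
  simp only [norm_one, mul_one, Real.norm_eq_abs] at hCS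
  have e1 : ∫ a, |g a| ^ (2:ℝ) ∂μ = ∫ t in Ioc (0:ℝ) y, (g t)^2 := by
    apply integral_congr_ae; filter_upwards with a
    rw [show ((2:ℝ)) = ((2:ℕ):ℝ) by norm_num, Real.rpow_natCast, sq_abs]
  have e2 : ∫ _a, (1:ℝ) ^ (2:ℝ) ∂μ = y := by
    simp [hμ, Real.volume_Ioc, ENNReal.toReal_ofReal hy, hy]
  rw [e1, e2] at hCS
  have hsub : ∫ t in Ioc (0:ℝ) y, (g t)^2 ≤ G ^ 2 := by
    refine le_trans ?_ hg2
    apply setIntegral_mono_set hg2i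
    · filter_upwards with t using sq_nonneg _
    · exact ae_of_all _ Ioc_subset_Ioi_self
  have hnn : 0 ≤ ∫ t in Ioc (0:ℝ) y, (g t)^2 :=
    integral_nonneg fun t => sq_nonneg _
  calc ∫ t in Ioc (0:ℝ) y, |g t| ≤
      (∫ t in Ioc (0:ℝ) y, (g t)^2) ^ (1/(2:ℝ)) * y ^ (1/(2:ℝ)) := hCS
    _ ≤ (G^2) ^ (1/(2:ℝ)) * L ^ (1/(2:ℝ)) := by
        apply mul_le_mul
        · exact Real.rpow_le_rpow hnn hsub (by norm_num)
        · exact Real.rpow_le_rpow hy hyL (by norm_num)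
        · exact Real.rpow_nonneg hy _
        · exact Real.rpow_nonneg (sq_nonneg G) _
    _ = Real.sqrt L * G := by
        rw [← Real.sqrt_eq_rpow, ← Real.sqrt_eq_rpow, Real.sqrt_sq hG, mul_comm]

set_option maxHeartbeats 1000000 in
/-- Continuous-dependence estimate for the linear ODE `w'' = g - K w` on `[0,L]` with
`w'(0) = 0`, `w(0) = α`: if `|K| ≤ 𝒦`, `‖g‖_{L²(0,∞)} ≤ G` and `δ = L/l` satisfies
`2δL𝒦 ≤ 1`, then `max_{[0,L]} |w| ≤ 2^l |α| + (2^l - 1)·2δ√L·G`. -/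
theorem stmt_6 (g K w : ℝ → ℝ) (𝒦 G L α : ℝ) (l : ℕ) (hl : 0 < l) (hL : 0 < L)
    (hG : 0 ≤ G)
    (hgc : Continuous g) (hKc : Continuous K)
    (hKb : ∀ x, |K x| ≤ 𝒦)
    (hg2 : ∫ x in Ioi (0 : ℝ), (g x) ^ 2 ≤ G ^ 2)
    (hg2i : IntegrableOn (fun x => (g x) ^ 2) (Ioi (0 : ℝ)))
    (hw : ContDiff ℝ 2 w)
    (hode : ∀ x ∈ Icc 0 L, deriv (deriv w) x = g x - K x * w x)
    (hw'0 : deriv w 0 = 0) (hw0 : w 0 = α)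
    (hδ : 2 * (L / l) * L * 𝒦 ≤ 1) :
    ∀ x ∈ Icc 0 L, |w x| ≤ 2 ^ l * |α| + (2 ^ l - 1) * (2 * (L / l) * Real.sqrt L * G) := by
  have hl' : (0:ℝ) < l := by exact_mod_cast hl
  set δ := L / (l:ℝ) with hδdef
  have hδpos : 0 < δ := div_pos hL hl'
  clear_value δ
  have h𝒦 : 0 ≤ 𝒦 := le_trans (abs_nonneg _) (hKb 0)
  have hsqL : 0 ≤ Real.sqrt L := Real.sqrt_nonneg L
  set C := 2 * δ * Real.sqrt L * G with hC
  have hC0 : 0 ≤ C := by positivity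
  clear_value C
  -- regularity
  have hdw : Differentiable ℝ w := hw.differentiable (by norm_num)
  have h1 : ContDiff ℝ 1 (deriv w) :=
    (contDiff_succ_iff_deriv.mp ((show ((2:WithTop ℕ∞)) = 1 + 1 by norm_num) ▸ hw)).2.2
  have hdw' : Differentiable ℝ (deriv w) := h1.differentiable one_ne_zero
  have hwc : Continuous w := hdw.continuous
  have hw'c : Continuous (deriv w) := hdw'.continuous
  have hw''c : Continuous (deriv (deriv w)) := h1.continuous_deriv le_rfl
  -- FTC for deriv w
  have hFTC1 : ∀ y : ℝ, deriv w y = ∫ t in (0:ℝ)..y, deriv (deriv w) t := by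
    intro y
    rw [intervalIntegral.integral_eq_sub_of_hasDerivAt
      (fun t _ => (hdw' t).hasDerivAt) (hw''c.intervalIntegrable 0 y), hw'0, sub_zero]
  -- derivative bound
  have hDB : ∀ b M : ℝ, 0 ≤ M → b ≤ L → (∀ t ∈ Icc (0:ℝ) b, |w t| ≤ M) →
      ∀ y ∈ Icc (0:ℝ) b, |deriv w y| ≤ Real.sqrt L * G + L * 𝒦 * M := by
    intro b M hM hbL hbound y hy
    have hy0 : 0 ≤ y := hy.1
    have hyL : y ≤ L := hy.2.trans hbL
    rw [hFTC1 y]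
    have hKwInt : IntervalIntegrable (fun t => K t * w t) volume 0 y :=
      (hKc.mul hwc).intervalIntegrable 0 y
    have hcong : (∫ t in (0:ℝ)..y, deriv (deriv w) t)
        = (∫ t in (0:ℝ)..y, g t) - ∫ t in (0:ℝ)..y, K t * w t := by
      rw [← intervalIntegral.integral_sub (hgc.intervalIntegrable 0 y) hKwInt]
      apply intervalIntegral.integral_congr
      intro t ht
      rw [uIcc_of_le hy0] at ht
      exact hode t ⟨ht.1, ht.2.trans hyL⟩
    rw [hcong]
    have h1g : |∫ t in (0:ℝ)..y, g t| ≤ Real.sqrt L * G := by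
      rw [intervalIntegral.integral_of_le hy0]
      have hni := MeasureTheory.norm_integral_le_integral_norm
        (μ := volume.restrict (Ioc (0:ℝ) y)) g
      simp only [Real.norm_eq_abs] at hni
      exact hni.trans (cs_aux g G L y hG hgc hg2 hg2i hy0 hyL)
    have h2g : |∫ t in (0:ℝ)..y, K t * w t| ≤ L * 𝒦 * M := by
      have hb := intervalIntegral.norm_integral_le_of_norm_le_const
        (C := 𝒦 * M) (f := fun t => K t * w t) (a := (0:ℝ)) (b := y) ?_
      · rw [Real.norm_eq_abs] at hb
        have : |y - 0| = y := by rw [sub_zero, abs_of_nonneg hy0]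
        rw [this] at hb
        refine hb.trans ?_
        have : 𝒦 * M * y ≤ 𝒦 * M * L := by
          apply mul_le_mul_of_nonneg_left hyL (by positivity)
        linarith
      · intro t ht
        rw [uIoc_of_le hy0] at ht
        have htb : t ∈ Icc (0:ℝ) b := ⟨ht.1.le, ht.2.trans hy.2⟩
        rw [Real.norm_eq_abs, abs_mul]
        exact mul_le_mul (hKb t) (hbound t htb) (abs_nonneg _) h𝒦
    calc |(∫ t in (0:ℝ)..y, g t) - ∫ t in (0:ℝ)..y, K t * w t|
        ≤ |∫ t in (0:ℝ)..y, g t| + |∫ t in (0:ℝ)..y, K t * w t| := abs_sub _ _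
      _ ≤ Real.sqrt L * G + L * 𝒦 * M := add_le_add h1g h2g
  -- main induction
  have key : ∀ k : ℕ, k ≤ l → ∀ x ∈ Icc (0:ℝ) (k * δ),
      |w x| ≤ 2 ^ k * |α| + (2 ^ k - 1) * C := by
    intro k
    induction k with
    | zero =>
      intro _ x hx
      have hx0 : x = 0 := le_antisymm (by simpa using hx.2) hx.1
      simp [hx0, hw0]
    | succ k ih =>
      intro hk1
      have hk : k ≤ l := Nat.le_of_succ_le hk1
      have ihk := ih hk
      have hkk : ((k:ℝ)) + 1 = ((k+1 : ℕ) : ℝ) := by push_cast; ring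
      set b := ((k+1 : ℕ) : ℝ) * δ with hb
      have hb0 : 0 ≤ b := by positivity
      have hbL : b ≤ L := by
        have h1 : ((k+1:ℕ):ℝ) ≤ (l:ℝ) := by exact_mod_cast hk1
        have h2 : ((k+1:ℕ):ℝ) * δ ≤ (l:ℝ) * δ := mul_le_mul_of_nonneg_right h1 hδpos.le
        have h3 : (l:ℝ) * δ = L := by rw [hδdef]; field_simp
        linarith
      clear_value b
      obtain ⟨x₀, hx₀, hmax⟩ := isCompact_Icc.exists_isMaxOn (nonempty_Icc.mpr hb0)
        (continuous_abs.comp hwc).continuousOn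
      set M := |w x₀| with hMdef
      have hM0 : 0 ≤ M := abs_nonneg _
      have hmax' : ∀ t ∈ Icc (0:ℝ) b, |w t| ≤ M := fun t ht => hmax ht
      clear_value M
      have hp2 : (0:ℝ) ≤ 2 ^ k := by positivity
      suffices hMle : M ≤ 2 ^ (k+1) * |α| + (2 ^ (k+1) - 1) * C by
        intro x hx
        exact (hmax' x hx).trans hMle
      by_cases hcase : x₀ ≤ (k:ℝ) * δ
      · have hMB := ihk x₀ ⟨hx₀.1, hcase⟩
        have hpow : (2:ℝ) ^ k ≤ 2 ^ (k+1) := by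
          rw [pow_succ]; nlinarith
        linarith [hMB, mul_nonneg (sub_nonneg.mpr hpow) (abs_nonneg α),
          mul_nonneg (sub_nonneg.mpr hpow) hC0]
      · push_neg at hcase
        set a := (k:ℝ) * δ with ha
        have ha0 : 0 ≤ a := by positivity
        clear_value a
        have hax : a ≤ x₀ := hcase.le
        have hwa : |w a| ≤ 2 ^ k * |α| + (2 ^ k - 1) * C := ihk a ⟨ha0, le_refl _⟩
        have hFTC2 : w x₀ - w a = ∫ t in a..x₀, deriv w t :=
          (intervalIntegral.integral_eq_sub_of_hasDerivAt
            (fun t _ => (hdw t).hasDerivAt) (hw'c.intervalIntegrable a x₀)).symm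
        have hder := hDB b M hM0 hbL hmax'
        have hRHS0 : 0 ≤ Real.sqrt L * G + L * 𝒦 * M := by positivity
        have hbnd : |w x₀ - w a| ≤ (x₀ - a) * (Real.sqrt L * G + L * 𝒦 * M) := by
          rw [hFTC2]
          have hpt : ∀ t ∈ Set.uIoc a x₀, ‖deriv w t‖ ≤ Real.sqrt L * G + L * 𝒦 * M := by
            intro t ht
            rw [uIoc_of_le hax] at ht
            exact hder t ⟨ha0.trans ht.1.le, ht.2.trans hx₀.2⟩
          have hb2 := intervalIntegral.norm_integral_le_of_norm_le_const hpt
          rw [Real.norm_eq_abs, abs_of_nonneg (sub_nonneg.mpr hax), mul_comm] at hb2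
          exact hb2
        have hx0a : x₀ - a ≤ δ := by
          have h6 := hx₀.2
          rw [hb, ← hkk] at h6
          have h7 : a = (k:ℝ) * δ := ha
          nlinarith [h6, h7]
        have hstep : M ≤ |w a| + δ * (Real.sqrt L * G + L * 𝒦 * M) := by
          have h4 : M ≤ |w a| + |w x₀ - w a| := by
            rw [hMdef]
            have := abs_add_le (w a) (w x₀ - w a); simpa using this
          have h5 : (x₀ - a) * (Real.sqrt L * G + L * 𝒦 * M)
              ≤ δ * (Real.sqrt L * G + L * 𝒦 * M) :=
            mul_le_mul_of_nonneg_right hx0a hRHS0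
          calc M ≤ |w a| + |w x₀ - w a| := h4
            _ ≤ |w a| + (x₀ - a) * (Real.sqrt L * G + L * 𝒦 * M) := by linarith
            _ ≤ |w a| + δ * (Real.sqrt L * G + L * 𝒦 * M) := by linarith
        have habs : δ * (L * 𝒦 * M) ≤ M / 2 := by
          nlinarith [mul_nonneg (sub_nonneg.mpr hδ) hM0]
        have hMhalf : M / 2 ≤ |w a| + δ * (Real.sqrt L * G) := by linarith [hstep, habs]
        have hCδ : 2 * (δ * (Real.sqrt L * G)) = C := by rw [hC]; ring
        have hpow : (2:ℝ) ^ (k+1) = 2 * 2 ^ k := by rw [pow_succ]; ring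
        rw [hpow]
        linarith [hwa, hMhalf, hCδ]
  have hlδ : (l:ℝ) * δ = L := by rw [hδdef]; field_simp
  intro x hx
  exact key l le_rfl x (by rw [hlδ]; exact hx)
end

section
/- Let θ ∈ (0, θ₀] and suppose u(·,t) : ℝ → [0,∞) is C², symmetric decreasing, with u, u_x, u_t ∈ L²(ℝ) appropriately, u(R,t) = θ at R = R_θ(t) := sup{x : u(x,t) ≥ θ}, u(x,t) ≤ θ₀ for x ≥ R, and u_t = u_{xx} on {x ≥ R} (since f vanishes on [0,θ₀]). Assume u_x(x,t), u(x,t) → 0 as x → ∞. Then (1/2) u_x(R,t)² ≤ ( θ₀ · sup_x |u_x(x,t)| · ∫_ℝ u_t(x,t)² dx )^{1/2}. -/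
open Set MeasureTheory Filter Topology

/-- Boundary-gradient estimate at the leading edge (ignition case): if `u` solves the
heat equation `g = u''` on `[R,∞)` (since `f` vanishes below `θ₀`), `u(R) = θ ≤ θ₀`,
`u` is nonincreasing on `[R,∞)` with `u, u' → 0` at `+∞` and `|u'| ≤ M`, then
`(1/2) u'(R)² ≤ √(θ₀ · M · ∫ g²)`. -/
theorem stmt_17 (u g : ℝ → ℝ) (R θ θ₀ M : ℝ)
    (hθ : 0 < θ) (hθ₀ : θ ≤ θ₀) (hM : 0 ≤ M)
    (hu : ContDiff ℝ 2 u)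
    (hpos : ∀ x, 0 ≤ u x)
    (hdec : AntitoneOn u (Ici R))
    (huR : u R = θ)
    (hub : ∀ x, R ≤ x → u x ≤ θ₀)
    (hM' : ∀ x, |deriv u x| ≤ M)
    (hheat : ∀ x, R ≤ x → g x = deriv (deriv u) x)
    (htop : Tendsto u atTop (nhds 0))
    (htop' : Tendsto (deriv u) atTop (nhds 0))
    (hg2 : Integrable (fun x => (g x) ^ 2))
    (hi1 : IntegrableOn (fun x => deriv u x * g x) (Ici R))
    (hi2 : IntegrableOn (fun x => (deriv u x) ^ 2) (Ici R)) :
    (1 / 2) * (deriv u R) ^ 2 ≤ Real.sqrt (θ₀ * M * ∫ x : ℝ, (g x) ^ 2) := by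
  have hθ₀pos : 0 < θ₀ := lt_of_lt_of_le hθ hθ₀
  -- differentiability facts
  have hud : Differentiable ℝ u := hu.differentiable (by norm_num)
  have hu1 : ContDiff ℝ 1 (deriv u) := by
    have h : ContDiff ℝ ((1 : WithTop ℕ∞) + 1) u := by
      have : ((1 : WithTop ℕ∞) + 1) = 2 := by norm_num
      rw [this]; exact hu
    exact (contDiff_succ_iff_deriv.mp h).2.2
  have hud2 : Differentiable ℝ (deriv u) := hu1.differentiable (by norm_num)
  have hdu : ∀ x, HasDerivAt u (deriv u x) x := fun x => (hud x).hasDerivAt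
  have hddu : ∀ x, HasDerivAt (deriv u) (deriv (deriv u) x) x := fun x => (hud2 x).hasDerivAt
  -- deriv u ≤ 0 on Ioi R
  have hnonpos : ∀ x ∈ Ioi R, deriv u x ≤ 0 := by
    intro x hx
    have hslope : Tendsto (slope u x) (𝓝[>] x) (𝓝 (deriv u x)) :=
      (hasDerivAt_iff_tendsto_slope.mp (hdu x)).mono_left
        (nhdsWithin_mono x (fun y hy => ne_of_gt hy))
    refine le_of_tendsto hslope ?_
    filter_upwards [self_mem_nhdsWithin] with y hy
    rw [slope_def_field]
    have h1 : u y ≤ u x := hdec (mem_Ici.mpr (le_of_lt (mem_Ioi.mp hx))) (mem_Ici.mpr (le_of_lt (lt_trans (mem_Ioi.mp hx) (mem_Ioi.mp hy)))) (le_of_lt hy)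
    have h2 : (0:ℝ) < y - x := sub_pos.mpr hy
    exact div_nonpos_of_nonpos_of_nonneg (by linarith) h2.le
  -- φ := (deriv u)²/2 has derivative u'·u''
  have hφ : ∀ x ∈ Ici R, HasDerivAt (fun y => (deriv u y) ^ 2 / 2)
      (deriv u x * deriv (deriv u) x) x := by
    intro x _
    have h := ((hddu x).mul (hddu x)).div_const 2
    simpa [pow_two, mul_comm, mul_assoc, mul_div_assoc] using
      (((hddu x).mul (hddu x)).div_const 2).congr_deriv (by ring)
  -- integrability of u'·u'' on Ioi R
  have hi1' : IntegrableOn (fun x => deriv u x * deriv (deriv u) x) (Ioi R) := by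
    refine ((hi1.mono_set Ioi_subset_Ici_self).congr_fun ?_ measurableSet_Ioi)
    intro x hx; simp only; rw [hheat x (le_of_lt hx)]
  -- tendsto of φ at top
  have hφtop : Tendsto (fun y => (deriv u y) ^ 2 / 2) atTop (𝓝 0) := by
    have := ((htop'.mul htop').div_const 2)
    simpa [pow_two] using this
  -- FTC on (R,∞): ∫ u' u'' = -(u' R)²/2
  have hI1 : ∫ x in Ioi R, deriv u x * deriv (deriv u) x = 0 - (deriv u R) ^ 2 / 2 :=
    integral_Ioi_of_hasDerivAt_of_tendsto' hφ hi1' hφtop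
  have hI2 : ∫ x in Ioi R, deriv u x * g x = 0 - (deriv u R) ^ 2 / 2 := by
    rw [← hI1]
    refine setIntegral_congr_fun measurableSet_Ioi (fun x hx => ?_)
    rw [hheat x (le_of_lt hx)]
  -- ∫_{Ioi R} (-u') = θ
  have hIu : ∫ x in Ioi R, -deriv u x = θ := by
    have := integral_Ioi_of_hasDerivAt_of_nonneg' (g := fun y => -u y)
      (g' := fun y => -deriv u y) (a := R)
      (fun x _ => (hdu x).neg) (fun x hx => neg_nonneg.mpr (hnonpos x hx))
      (htop.neg)
    simpa [huR] using this
  have hIu_int : IntegrableOn (fun x => -deriv u x) (Ioi R) :=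
    integrableOn_Ioi_deriv_of_nonneg' (g := fun y => -u y) (g' := fun y => -deriv u y)
      (fun x _ => (hdu x).neg) (fun x hx => neg_nonneg.mpr (hnonpos x hx)) htop.neg
  -- ∫_{Ioi R} u'² ≤ M θ
  have hA : ∫ x in Ioi R, (deriv u x) ^ 2 ≤ M * θ := by
    have hmono : ∫ x in Ioi R, (deriv u x) ^ 2 ≤ ∫ x in Ioi R, M * (-deriv u x) := by
      refine setIntegral_mono_on (hi2.mono_set Ioi_subset_Ici_self)
        (hIu_int.const_mul M) measurableSet_Ioi (fun x hx => ?_)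
      have h1 : |deriv u x| ≤ M := hM' x
      have h2 : deriv u x ≤ 0 := hnonpos x hx
      have : (deriv u x) ^ 2 = |deriv u x| * (-deriv u x) := by
        rw [abs_of_nonpos h2]; ring
      rw [this]
      exact mul_le_mul_of_nonneg_right h1 (neg_nonneg.mpr h2)
    calc ∫ x in Ioi R, (deriv u x) ^ 2 ≤ ∫ x in Ioi R, M * (-deriv u x) := hmono
      _ = M * θ := by rw [integral_const_mul, hIu]
  -- ∫_{Ioi R} g² ≤ ∫ g²
  have hg2nn : 0 ≤ ∫ x : ℝ, (g x) ^ 2 := integral_nonneg (fun x => sq_nonneg _)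
  have hB : ∫ x in Ioi R, (g x) ^ 2 ≤ ∫ x : ℝ, (g x) ^ 2 :=
    setIntegral_le_integral hg2 (Eventually.of_forall fun x => sq_nonneg _)
  -- measurability of g on Ioi R
  have hgae : g =ᵐ[volume.restrict (Ioi R)] (fun x => deriv (deriv u) x) := by
    refine (ae_restrict_iff' measurableSet_Ioi).mpr
      (Eventually.of_forall fun x hx => hheat x (le_of_lt hx))
  have hgm : AEStronglyMeasurable g (volume.restrict (Ioi R)) :=
    ((hu1.continuous_deriv le_rfl).aestronglyMeasurable).congr hgae.symm
  have hdum : AEStronglyMeasurable (deriv u) (volume.restrict (Ioi R)) :=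
    (hud2.continuous).aestronglyMeasurable.restrict
  -- MemLp
  have h2 : (ENNReal.ofReal 2) = (2 : ENNReal) := by
    simp [ENNReal.ofReal_ofNat]
  have hmem1 : MemLp (deriv u) (ENNReal.ofReal 2) (volume.restrict (Ioi R)) := by
    rw [h2]
    exact (memLp_two_iff_integrable_sq hdum).mpr (hi2.mono_set Ioi_subset_Ici_self)
  have hmem2 : MemLp g (ENNReal.ofReal 2) (volume.restrict (Ioi R)) := by
    rw [h2]
    exact (memLp_two_iff_integrable_sq hgm).mpr hg2.integrableOn
  -- Cauchy–Schwarz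
  have hconj : Real.HolderConjugate 2 2 := Real.HolderConjugate.two_two
  have hCS : ∫ x in Ioi R, ‖deriv u x‖ * ‖g x‖ ≤
      (∫ x in Ioi R, ‖deriv u x‖ ^ (2:ℝ)) ^ (1/2 : ℝ) *
      (∫ x in Ioi R, ‖g x‖ ^ (2:ℝ)) ^ (1/2 : ℝ) :=
    integral_mul_norm_le_Lp_mul_Lq hconj hmem1 hmem2
  have hnorm1 : ∀ x : ℝ, ‖deriv u x‖ ^ (2:ℝ) = (deriv u x) ^ 2 := fun x => by
    rw [show (2:ℝ) = ((2:ℕ):ℝ) by norm_num, Real.rpow_natCast]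
    simp [Real.norm_eq_abs, sq_abs]
  have hnorm2 : ∀ x : ℝ, ‖g x‖ ^ (2:ℝ) = (g x) ^ 2 := fun x => by
    rw [show (2:ℝ) = ((2:ℕ):ℝ) by norm_num, Real.rpow_natCast]
    simp [Real.norm_eq_abs, sq_abs]
  have hA' : (0:ℝ) ≤ ∫ x in Ioi R, (deriv u x) ^ 2 := integral_nonneg fun x => sq_nonneg _
  have hB' : (0:ℝ) ≤ ∫ x in Ioi R, (g x) ^ 2 := integral_nonneg fun x => sq_nonneg _
  have key : (1/2) * (deriv u R) ^ 2 ≤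
      Real.sqrt (∫ x in Ioi R, (deriv u x) ^ 2) * Real.sqrt (∫ x in Ioi R, (g x) ^ 2) := by
    have h1 : (1/2 : ℝ) * (deriv u R) ^ 2 = -(∫ x in Ioi R, deriv u x * g x) := by
      rw [hI2]; ring
    have h2' : -(∫ x in Ioi R, deriv u x * g x) ≤ ∫ x in Ioi R, ‖deriv u x‖ * ‖g x‖ := by
      have := norm_integral_le_integral_norm (μ := volume.restrict (Ioi R))
        (f := fun x => deriv u x * g x)
      rw [Real.norm_eq_abs] at this
      calc -(∫ x in Ioi R, deriv u x * g x) ≤ |∫ x in Ioi R, deriv u x * g x| :=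
            neg_le_abs _
        _ ≤ ∫ x in Ioi R, ‖deriv u x * g x‖ := this
        _ = ∫ x in Ioi R, ‖deriv u x‖ * ‖g x‖ := by simp [norm_mul]
    rw [h1]
    refine h2'.trans (hCS.trans_eq ?_)
    simp only [hnorm1, hnorm2]
    rw [Real.sqrt_eq_rpow, Real.sqrt_eq_rpow]
  have hfinal : Real.sqrt (∫ x in Ioi R, (deriv u x) ^ 2) *
      Real.sqrt (∫ x in Ioi R, (g x) ^ 2) ≤ Real.sqrt (θ₀ * M * ∫ x : ℝ, (g x) ^ 2) := by
    rw [← Real.sqrt_mul hA']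
    apply Real.sqrt_le_sqrt
    have : (∫ x in Ioi R, (deriv u x) ^ 2) * (∫ x in Ioi R, (g x) ^ 2) ≤
        (M * θ) * (∫ x : ℝ, (g x) ^ 2) := mul_le_mul hA hB hB' (by nlinarith)
    refine this.trans ?_
    have : M * θ ≤ θ₀ * M := by nlinarith
    nlinarith
  exact key.trans hfinal
end
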